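/- ℓ₁ is not weak Rudin–Keisler reducible to I_ω: there is no infinite set A ⊆ 2^{<ω} and function f : A → ℕ such that for every X ⊆ ℕ, X ∈ ℓ₁ if and only if f⁻¹[X] ∈ I_ω. -/

import Mathlib

/-- The summable ideal `ℓ₁ = {X ⊆ ℕ : ∑_{n ∈ X} 1/(n+1) < ∞}`. -/
def ell1 : Set (Set ℕ) := {X | Summable (fun n : X => (1 : ℝ) / ((n : ℕ) + 1))}

/-- `Ialpha α`: sets of binary strings admitting an order-reversing map into `α`,
i.e. `f t < f s` whenever `s` is a proper prefix of `t` (both in `X`). -/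
def Ialpha (α : Ordinal) : Set (Set (List Bool)) :=
  {X | ∃ f : List Bool → Ordinal, (∀ s ∈ X, f s < α) ∧
    ∀ s ∈ X, ∀ t ∈ X, s <+: t → s ≠ t → f t < f s}

/-- Weak Rudin–Keisler reducibility: there is an infinite `B' ⊆ B` and `f : B' → A`
such that `X ∈ I ↔ f⁻¹[X] ∈ J` for all `X ⊆ A`. -/
def wRK {A B : Type*} (I : Set (Set A)) (J : Set (Set B)) : Prop :=
  ∃ (B' : Set B) (f : B' → A), B'.Infinite ∧
    ∀ X : Set A, X ∈ I ↔ (Subtype.val '' (f ⁻¹' X)) ∈ J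

/-- chain of n+1 elements in Z starting at s -/
def HasChainUpTo (Z : Set (List Bool)) (s : List Bool) (n : ℕ) : Prop :=
  ∃ c : ℕ → List Bool, c 0 = s ∧ (∀ i ≤ n, c i ∈ Z) ∧
    ∀ i j, i < j → j ≤ n → (c i <+: c j ∧ c i ≠ c j)

lemma hasChainUpTo_mono {Z Z' : Set (List Bool)} (h : Z ⊆ Z') {s : List Bool} {n : ℕ}
    (hc : HasChainUpTo Z s n) : HasChainUpTo Z' s n := by
  obtain ⟨c, h1, h2, h3⟩ := hc
  exact ⟨c, h1, fun i hi => h (h2 i hi), h3⟩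

lemma hasChainUpTo_zero {Z : Set (List Bool)} {s : List Bool} (hs : s ∈ Z) :
    HasChainUpTo Z s 0 :=
  ⟨fun _ => s, rfl, fun i _ => hs, fun i j hij hj => absurd hj (by omega)⟩

lemma strict_prefix_length {s t : List Bool} (h : s <+: t) (hne : s ≠ t) :
    s.length < t.length := by
  rcases lt_or_eq_of_le h.length_le with h' | h'
  · exact h'
  · exact absurd (h.eq_of_length h') hne

lemma bound_of_mem_Ialpha {Z : Set (List Bool)} (hZ : Z ∈ Ialpha Ordinal.omega0)
    {s : List Bool} (hs : s ∈ Z) : ∃ B : ℕ, ∀ n, HasChainUpTo Z s n → n ≤ B := by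
  obtain ⟨g, hlt, hdec⟩ := hZ
  obtain ⟨B, hB⟩ := Ordinal.lt_omega0.1 (hlt s hs)
  refine ⟨B, fun n hn => ?_⟩
  obtain ⟨c, hc0, hcZ, hcc⟩ := hn
  have key : ∀ i, i ≤ n → g (c i) + i ≤ g (c 0) := by
    intro i
    induction i with
    | zero => simp
    | succ i ih =>
      intro h
      have h1 := hcc i (i + 1) (by omega) h
      have h2 : g (c (i + 1)) < g (c i) :=
        hdec _ (hcZ i (by omega)) _ (hcZ (i + 1) h) h1.1 h1.2
      have h3 : g (c (i + 1)) + 1 ≤ g (c i) := Order.add_one_le_iff.2 h2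
      calc g (c (i + 1)) + ((i : ℕ) + 1 : ℕ)
          = (g (c (i + 1)) + 1) + (i : ℕ) := by
            rw [add_assoc]
            congr 1
            rw [Ordinal.one_add_natCast, Ordinal.natCast_succ]
            rfl
        _ ≤ g (c i) + (i : ℕ) := add_le_add_left h3 _
        _ ≤ g (c 0) := ih (by omega)
  have : (n : Ordinal) ≤ g (c 0) :=
    le_trans le_add_self (key n le_rfl)
  rw [hc0, hB] at this
  exact_mod_cast this

lemma exists_unbounded_chain {Z : Set (List Bool)} (hZ : Z ∉ Ialpha Ordinal.omega0) :
    ∃ s ∈ Z, ∀ n, HasChainUpTo Z s n := by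
  by_contra hcon
  push_neg at hcon
  -- hcon : ∀ s ∈ Z, ∃ n, ¬ HasChainUpTo Z s n
  apply hZ
  classical
  refine ⟨fun s => if h : ∃ n, ¬ HasChainUpTo Z s n then ((Nat.find h : ℕ) : Ordinal) else 0,
    ?_, ?_⟩
  · intro s hs
    simp only []
    rw [dif_pos (hcon s hs)]
    exact Ordinal.nat_lt_omega0 _
  · intro s hs t ht hpre hne
    have hs' := hcon s hs
    have ht' := hcon t ht
    simp only []
    rw [dif_pos hs', dif_pos ht', Nat.cast_lt]
    have hfind := Nat.find_spec hs'
    have hpos : 1 ≤ Nat.find hs' := by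
      rcases Nat.eq_zero_or_pos (Nat.find hs') with h0 | h0
      · rw [h0] at hfind
        exact absurd (hasChainUpTo_zero hs) hfind
      · exact h0
    have hnot : ¬ HasChainUpTo Z t (Nat.find hs' - 1) := by
      rintro ⟨c, hc0, hcZ, hcc⟩
      apply hfind
      refine ⟨fun i => if i = 0 then s else c (i - 1), by simp, ?_, ?_⟩
      · intro i hi
        by_cases h0 : i = 0
        · simpa [h0] using hs
        · simpa [h0] using hcZ (i - 1) (by omega)
      · intro i j hij hj
        by_cases h0 : i = 0
        · have hj0 : ¬ (j = 0) := by omega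
          simp only [h0, if_pos rfl, if_neg hj0]
          have htc : t <+: c (j - 1) ∧ (t = c (j-1) ∨ t ≠ c (j - 1)) := by
            rcases Nat.eq_zero_or_pos (j - 1) with h1 | h1
            · rw [h1, hc0]; exact ⟨List.prefix_refl _, Or.inl rfl⟩
            · have := hcc 0 (j - 1) (by omega) (by omega)
              rw [hc0] at this
              exact ⟨this.1, Or.inr this.2⟩
          constructor
          · exact hpre.trans htc.1
          · have hlen : s.length < t.length := strict_prefix_length hpre hne
            have hlen2 : t.length ≤ (c (j - 1)).length := htc.1.length_le
            intro heq
            simp only [if_true] at heq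
            rw [heq] at hlen
            omega
        · have hj0 : ¬ (j = 0) := by omega
          simp only [if_neg h0, if_neg hj0]
          exact hcc (i - 1) (j - 1) (by omega) (by omega)
    have := Nat.find_le (h := ht') hnot
    omega

lemma subchain {Z : Set (List Bool)} {s₀ : List Bool} {c : ℕ → List Bool} {n : ℕ}
    (hc0 : c 0 = s₀)
    (hcc : ∀ i j, i < j → j ≤ n → (c i <+: c j ∧ c i ≠ c j))
    (hs₀ : s₀ ∈ Z) (S : Finset ℕ)
    (hS : ∀ i ∈ S, 0 < i ∧ i ≤ n ∧ c i ∈ Z) :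
    HasChainUpTo Z s₀ S.card := by
  classical
  set m := S.card with hm
  have e := S.orderEmbOfFin hm.symm
  have hmem : ∀ i : Fin m, S.orderEmbOfFin hm.symm i ∈ S :=
    fun i => Finset.orderEmbOfFin_mem S hm.symm i
  refine ⟨fun j => if h : 1 ≤ j ∧ j ≤ m then c (S.orderEmbOfFin hm.symm ⟨j - 1, by omega⟩)
    else s₀, by simp, ?_, ?_⟩
  · intro j hj
    simp only []
    by_cases h : 1 ≤ j ∧ j ≤ m
    · rw [dif_pos h]
      exact (hS _ (hmem _)).2.2
    · rw [dif_neg h]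
      exact hs₀
  · intro i j hij hj
    simp only []
    have hjm : 1 ≤ j ∧ j ≤ m := ⟨by omega, hj⟩
    rw [dif_pos hjm]
    obtain ⟨hpos, hle, _⟩ := hS _ (hmem ⟨j - 1, by omega⟩)
    by_cases h0 : i = 0
    · rw [h0, dif_neg (by omega)]
      have := hcc 0 (S.orderEmbOfFin hm.symm ⟨j - 1, by omega⟩) hpos hle
      rwa [hc0] at this
    · have him : 1 ≤ i ∧ i ≤ m := ⟨by omega, by omega⟩
      rw [dif_pos him]
      obtain ⟨hpos', hle', _⟩ := hS _ (hmem ⟨i - 1, by omega⟩)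
      refine hcc _ _ ?_ hle
      exact (S.orderEmbOfFin hm.symm).strictMono (by simp [Fin.lt_def]; omega)


lemma sum_union_le' {A B : Finset ℕ} {f : ℕ → ℝ} (hf : ∀ x, 0 ≤ f x) :
    ∑ x ∈ A ∪ B, f x ≤ ∑ x ∈ A, f x + ∑ x ∈ B, f x := by
  classical
  have h1 : A ∪ B = A ∪ (B \ A) := by
    rw [Finset.union_sdiff_self_eq_union]
  rw [h1, Finset.sum_union (Finset.disjoint_sdiff)]
  have h2 : ∑ x ∈ B \ A, f x ≤ ∑ x ∈ B, f x :=
    Finset.sum_le_sum_of_subset_of_nonneg (Finset.sdiff_subset) (fun i _ _ => hf i)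
  linarith

lemma sum_biUnion_le' {s : Finset ℕ} {t : ℕ → Finset ℕ} {f : ℕ → ℝ}
    (hf : ∀ x, 0 ≤ f x) : ∑ x ∈ s.biUnion t, f x ≤ ∑ k ∈ s, ∑ x ∈ t k, f x := by
  classical
  induction s using Finset.induction with
  | empty => simp
  | @insert a s ha ih =>
    rw [Finset.biUnion_insert, Finset.sum_insert ha]
    exact le_trans (sum_union_le' hf) (by linarith)


/-- `ℓ₁` is not weak Rudin–Keisler reducible to `I_ω`. -/
theorem ell1_not_wRK_Iomega : ¬ wRK ell1 (Ialpha Ordinal.omega0) := by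
  classical
  rintro ⟨B', f, hinf, hred⟩
  set F : List Bool → ℕ := fun t => if h : t ∈ B' then f ⟨t, h⟩ else 0 with hFdef
  have hP : ∀ X : Set ℕ, Subtype.val '' (f ⁻¹' X) = {t | t ∈ B' ∧ F t ∈ X} := by
    intro X
    ext t
    constructor
    · rintro ⟨⟨t, ht⟩, hfx, rfl⟩
      refine ⟨ht, ?_⟩
      simpa [hFdef, dif_pos ht] using hfx
    · rintro ⟨ht, hFt⟩
      refine ⟨⟨t, ht⟩, ?_, rfl⟩
      simpa [hFdef, dif_pos ht] using hFt
  have hred' : ∀ X : Set ℕ, X ∈ ell1 ↔ {t | t ∈ B' ∧ F t ∈ X} ∈ Ialpha Ordinal.omega0 := by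
    intro X; rw [← hP]; exact hred X
  have huniv : (Set.univ : Set ℕ) ∉ ell1 := by
    intro h
    have h2 : Summable (fun n : ℕ => (1 : ℝ) / ((n : ℝ) + 1)) := by
      have := h.comp_injective (i := fun n : ℕ => (⟨n, trivial⟩ : (Set.univ : Set ℕ)))
        (fun a b hab => congrArg Subtype.val hab)
      exact this
    have h3 : Summable (fun n : ℕ => (1 : ℝ) / (n : ℝ)) := by
      rw [← summable_nat_add_iff 1]
      simpa [Nat.cast_add] using h2
    exact Real.not_summable_one_div_natCast h3
  have hfin : ∀ X : Set ℕ, X.Finite → X ∈ ell1 := by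
    intro X hX
    have : Finite X := hX
    exact Summable.of_finite
  -- the whole space
  have hY : {t | t ∈ B' ∧ F t ∈ (Set.univ : Set ℕ)} ∉ Ialpha Ordinal.omega0 := by
    intro h
    exact huniv ((hred' Set.univ).2 h)
  obtain ⟨s₀, hs₀Y, hlong⟩ := exists_unbounded_chain hY
  have hs₀B : s₀ ∈ B' := hs₀Y.1
  set v₀ : ℕ := F s₀ with hv₀
  -- bound extraction
  have hbound : ∀ X : Set ℕ, X ∈ ell1 → v₀ ∈ X →
      ∃ B : ℕ, ∀ n, HasChainUpTo {t | t ∈ B' ∧ F t ∈ X} s₀ n → n ≤ B := by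
    intro X hX hv
    exact bound_of_mem_Ialpha ((hred' X).1 hX) ⟨hs₀B, hv⟩
  -- key claim
  have claim : ∀ k : ℕ, ∃ G : Finset ℕ, G.card ≤ k + 1 ∧
      (∀ v ∈ G, (k + 1) * 2 ^ k ≤ v) ∧
      HasChainUpTo {t | t ∈ B' ∧ F t ∈ ({v₀} ∪ ↑G : Set ℕ)} s₀ (k + 1) := by
    intro k
    set N := (k + 1) * 2 ^ k with hN
    have hXkfin : ({v₀} ∪ {v | v ≤ N} : Set ℕ).Finite := by
      apply Set.Finite.union (Set.finite_singleton v₀)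
      exact Set.finite_Iic N
    obtain ⟨B, hB⟩ := hbound _ (hfin _ hXkfin) (Set.mem_union_left _ rfl)
    set n := B + (k + 1) * (k + 2) + 2 with hn
    obtain ⟨c, hc0, hcY, hcc⟩ := hlong n
    have hcB : ∀ i ≤ n, c i ∈ B' := fun i hi => (hcY i hi).1
    set Small := (Finset.range (n + 1)).filter (fun i => F (c i) = v₀ ∨ F (c i) ≤ N)
      with hSmallDef
    have hSmallcard : Small.card ≤ B + 1 := by
      have h1 : ∀ i ∈ Small.erase 0, 0 < i ∧ i ≤ n ∧
          c i ∈ {t | t ∈ B' ∧ F t ∈ ({v₀} ∪ {v | v ≤ N} : Set ℕ)} := by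
        intro i hi
        have h2 := Finset.mem_of_mem_erase hi
        rw [hSmallDef, Finset.mem_filter, Finset.mem_range] at h2
        refine ⟨Nat.pos_of_ne_zero (Finset.ne_of_mem_erase hi), by omega,
          hcB i (by omega), ?_⟩
        rcases h2.2 with h | h
        · exact Set.mem_union_left _ h
        · exact Set.mem_union_right _ h
      have h3 := hB _ (subchain (Z := {t | t ∈ B' ∧ F t ∈ ({v₀} ∪ {v | v ≤ N} : Set ℕ)})
        hc0 hcc ⟨hs₀B, Set.mem_union_left _ rfl⟩ (Small.erase 0) h1)
      have h4 := Finset.pred_card_le_card_erase (s := Small) (a := 0)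
      omega
    set Big := (Finset.range (n + 1)).filter
      (fun i => 0 < i ∧ ¬(F (c i) = v₀ ∨ F (c i) ≤ N)) with hBigDef
    have hBigmem : ∀ i ∈ Big, (0 < i ∧ i ≤ n) ∧ (F (c i) ≠ v₀ ∧ N < F (c i)) := by
      intro i hi
      rw [hBigDef, Finset.mem_filter, Finset.mem_range] at hi
      refine ⟨⟨hi.2.1, by omega⟩, ?_, ?_⟩
      · intro h; exact hi.2.2 (Or.inl h)
      · by_contra h; exact hi.2.2 (Or.inr (by omega))
    have hBigcard : (k + 1) * (k + 2) + 1 ≤ Big.card := by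
      have hsub : Finset.range (n + 1) ⊆ (Small ∪ Big) ∪ {0} := by
        intro i hi
        rw [Finset.mem_union, Finset.mem_union]
        by_cases h0 : i = 0
        · exact Or.inr (by simp [h0])
        · by_cases hd : F (c i) = v₀ ∨ F (c i) ≤ N
          · exact Or.inl (Or.inl (Finset.mem_filter.2 ⟨hi, hd⟩))
          · exact Or.inl (Or.inr (Finset.mem_filter.2 ⟨hi, Nat.pos_of_ne_zero h0, hd⟩))
      have h5 := Finset.card_le_card hsub
      have h6 := Finset.card_union_le (Small ∪ Big) ({0} : Finset ℕ)
      have h7 := Finset.card_union_le Small Big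
      have h8 : (Finset.range (n + 1)).card = n + 1 := Finset.card_range _
      simp only [Finset.card_singleton] at h6
      omega
    set V := Big.image (fun i => F (c i)) with hVDef
    have hVval : ∀ v ∈ V, N < v := by
      intro v hv
      rw [hVDef, Finset.mem_image] at hv
      obtain ⟨i, hi, rfl⟩ := hv
      exact (hBigmem i hi).2.2
    by_cases hVcard : k + 1 ≤ V.card
    · -- many distinct values
      obtain ⟨G, hGsub, hGcard⟩ := Finset.exists_subset_card_eq hVcard
      set ix : ℕ → ℕ := fun v => if h : ∃ i ∈ Big, F (c i) = v then h.choose else 0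
        with hixDef
      have hixspec : ∀ v ∈ G, ix v ∈ Big ∧ F (c (ix v)) = v := by
        intro v hv
        have hvV := hGsub hv
        rw [hVDef, Finset.mem_image] at hvV
        have hex : ∃ i ∈ Big, F (c i) = v := hvV
        rw [hixDef]
        dsimp only
        rw [dif_pos hex]
        exact ⟨hex.choose_spec.1, hex.choose_spec.2⟩
      set S₀ := G.image ix with hS₀Def
      have hS₀card : S₀.card = k + 1 := by
        rw [hS₀Def, Finset.card_image_of_injOn, hGcard]
        intro a ha b hb hab
        rw [← (hixspec a ha).2, ← (hixspec b hb).2, hab]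
      have hchainG : HasChainUpTo {t | t ∈ B' ∧ F t ∈ ({v₀} ∪ ↑G : Set ℕ)} s₀ (k + 1) := by
        rw [← hS₀card]
        apply subchain (Z := {t | t ∈ B' ∧ F t ∈ ({v₀} ∪ ↑G : Set ℕ)})
          hc0 hcc ⟨hs₀B, Set.mem_union_left _ rfl⟩
        intro i hi
        rw [hS₀Def, Finset.mem_image] at hi
        obtain ⟨v, hv, rfl⟩ := hi
        obtain ⟨hBigv, hFv⟩ := hixspec v hv
        have hm := hBigmem _ hBigv
        refine ⟨hm.1.1, hm.1.2, hcB _ hm.1.2, ?_⟩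
        rw [hFv]
        exact Set.mem_union_right _ (by exact_mod_cast hv)
      refine ⟨G, le_of_eq hGcard, fun v hv => by have := hVval v (hGsub hv); omega, hchainG⟩
    · -- pigeonhole: one value with many indices
      push_neg at hVcard
      have hmaps : ∀ i ∈ Big, F (c i) ∈ V := fun i hi =>
        Finset.mem_image_of_mem _ hi
      have hlt : V.card * (k + 1) < Big.card := by
        have : V.card * (k + 1) ≤ k * (k + 1) := by
          apply Nat.mul_le_mul_right
          omega
        nlinarith
      obtain ⟨v, hvV, hfiber⟩ :=
        Finset.exists_lt_card_fiber_of_mul_lt_card_of_maps_to hmaps hlt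
      obtain ⟨S₀, hS₀sub, hS₀card⟩ :=
        Finset.exists_subset_card_eq (s := Big.filter (fun i => F (c i) = v)) (n := k + 1)
          (by omega)
      have hchainG : HasChainUpTo {t | t ∈ B' ∧ F t ∈ ({v₀} ∪ ↑({v} : Finset ℕ) : Set ℕ)}
          s₀ (k + 1) := by
        rw [← hS₀card]
        apply subchain (Z := {t | t ∈ B' ∧ F t ∈ ({v₀} ∪ ↑({v} : Finset ℕ) : Set ℕ)})
          hc0 hcc ⟨hs₀B, Set.mem_union_left _ rfl⟩
        intro i hi
        have hi2 := hS₀sub hi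
        rw [Finset.mem_filter] at hi2
        have hm := hBigmem _ hi2.1
        refine ⟨hm.1.1, hm.1.2, hcB _ hm.1.2, ?_⟩
        rw [hi2.2]
        exact Set.mem_union_right _ (by simp)
      refine ⟨{v}, by simp, ?_, hchainG⟩
      intro w hw
      rw [Finset.mem_singleton] at hw
      subst hw
      have := hVval _ hvV
      omega
  choose G hGcard hGval hGchain using claim
  set Xs : Set ℕ := {v₀} ∪ ⋃ k, ↑(G k) with hXsDef
  have hGsub : ∀ k, ({v₀} ∪ ↑(G k) : Set ℕ) ⊆ Xs := by
    intro k v hv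
    rcases hv with hv | hv
    · exact Set.mem_union_left _ hv
    · exact Set.mem_union_right _ (Set.mem_iUnion.2 ⟨k, hv⟩)
  have hchainXs : ∀ k, HasChainUpTo {t | t ∈ B' ∧ F t ∈ Xs} s₀ (k + 1) := by
    intro k
    apply hasChainUpTo_mono _ (hGchain k)
    intro t ht
    exact ⟨ht.1, hGsub k ht.2⟩
  -- summability of Xs
  have hXs : Xs ∈ ell1 := by
    have hind : Summable (Set.indicator Xs (fun v : ℕ => (1 : ℝ) / ((v : ℝ) + 1))) := by
      apply summable_of_sum_range_le (c := 1 / ((v₀ : ℝ) + 1) + 2)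
      · intro nn
        exact Set.indicator_nonneg (fun v _ => by positivity) _
      · intro nn
        have hrw : ∑ i ∈ Finset.range nn, Set.indicator Xs (fun v : ℕ => (1 : ℝ) / ((v : ℝ) + 1)) i
            = ∑ i ∈ (Finset.range nn).filter (· ∈ Xs), (1 : ℝ) / ((i : ℝ) + 1) := by
          rw [Finset.sum_filter]
          exact Finset.sum_congr rfl (fun i _ => by rw [Set.indicator_apply])
        rw [hrw]
        set u := (Finset.range nn).filter (· ∈ Xs) with huDef
        set kk : ℕ → ℕ := fun v => if h : ∃ k, v ∈ G k then h.choose else 0 with hkkDef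
        set K := u.sup kk + 1 with hKDef
        have hsub : u ⊆ insert v₀ ((Finset.range K).biUnion G) := by
          intro v hv
          have hvX : v ∈ Xs := (Finset.mem_filter.1 hv).2
          rcases hvX with hv0 | hvU
          · rw [hv0]
            exact Finset.mem_insert_self _ _
          · rw [Set.mem_iUnion] at hvU
            obtain ⟨k, hk⟩ := hvU
            have hex : ∃ k, v ∈ G k := ⟨k, hk⟩
            refine Finset.mem_insert_of_mem (Finset.mem_biUnion.2 ⟨kk v, ?_, ?_⟩)
            · rw [Finset.mem_range, hKDef]
              exact Nat.lt_succ_of_le (Finset.le_sup hv)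
            · rw [hkkDef]
              dsimp only
              rw [dif_pos hex]
              exact hex.choose_spec
        have hGsum : ∀ k, ∑ i ∈ G k, (1 : ℝ) / ((i : ℝ) + 1) ≤ (1 / 2 : ℝ) ^ k := by
          intro k
          have hterm : ∀ i ∈ G k, (1 : ℝ) / ((i : ℝ) + 1) ≤ 1 / ((k + 1 : ℝ) * 2 ^ k) := by
            intro i hi
            have h1 := hGval k i hi
            have h2 : ((k + 1 : ℕ) * 2 ^ k : ℝ) ≤ (i : ℝ) + 1 := by
              have : ((k + 1) * 2 ^ k : ℕ) ≤ i + 1 := by omega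
              exact_mod_cast this
            have h3 : (0 : ℝ) < ((k : ℝ) + 1) * 2 ^ k := by positivity
            apply one_div_le_one_div_of_le h3
            push_cast at h2 ⊢
            linarith
          have h4 := Finset.sum_le_card_nsmul _ _ _ hterm
          have h5 : ((G k).card : ℝ) ≤ (k + 1 : ℝ) := by
            have := hGcard k
            exact_mod_cast this
          rw [nsmul_eq_mul] at h4
          have h6 : (0 : ℝ) < ((k : ℝ) + 1) * 2 ^ k := by positivity
          calc ∑ i ∈ G k, (1 : ℝ) / ((i : ℝ) + 1)
              ≤ ((G k).card : ℝ) * (1 / ((k + 1 : ℝ) * 2 ^ k)) := h4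
            _ ≤ ((k : ℝ) + 1) * (1 / ((k + 1 : ℝ) * 2 ^ k)) := by
                apply mul_le_mul_of_nonneg_right h5
                positivity
            _ = (1 / 2 : ℝ) ^ k := by
                field_simp
                rw [← mul_pow]; norm_num
        calc ∑ i ∈ u, (1 : ℝ) / ((i : ℝ) + 1)
            ≤ ∑ i ∈ insert v₀ ((Finset.range K).biUnion G), (1 : ℝ) / ((i : ℝ) + 1) :=
              Finset.sum_le_sum_of_subset_of_nonneg hsub (fun i _ _ => by positivity)
          _ ≤ 1 / ((v₀ : ℝ) + 1) + ∑ i ∈ (Finset.range K).biUnion G, (1 : ℝ) / ((i : ℝ) + 1) := by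
              by_cases hmem : v₀ ∈ (Finset.range K).biUnion G
              · rw [Finset.insert_eq_self.2 hmem]
                have : (0 : ℝ) ≤ 1 / ((v₀ : ℝ) + 1) := by positivity
                linarith
              · rw [Finset.sum_insert hmem]
          _ ≤ 1 / ((v₀ : ℝ) + 1) + ∑ k ∈ Finset.range K, ∑ i ∈ G k, (1 : ℝ) / ((i : ℝ) + 1) := by
              have := sum_biUnion_le' (s := Finset.range K) (t := G)
                (f := fun i : ℕ => (1 : ℝ) / ((i : ℝ) + 1)) (fun x => by positivity)
              linarith
          _ ≤ 1 / ((v₀ : ℝ) + 1) + ∑ k ∈ Finset.range K, (1 / 2 : ℝ) ^ k := by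
              have := Finset.sum_le_sum (fun k (_ : k ∈ Finset.range K) => hGsum k)
              linarith
          _ ≤ 1 / ((v₀ : ℝ) + 1) + 2 := by
              have := sum_geometric_two_le K
              linarith
    rw [ell1, Set.mem_setOf_eq]
    have := (summable_subtype_iff_indicator
      (s := Xs) (f := fun v : ℕ => (1 : ℝ) / ((v : ℝ) + 1))).2 hind
    apply this.congr
    intro x
    rfl
  obtain ⟨Bf, hBf⟩ := hbound Xs hXs (Set.mem_union_left _ rfl)
  have := hBf (Bf + 2) (hchainXs (Bf + 1))
  omega
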